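/- Let f : S × S → ℝ be bounded Borel measurable, symmetric (f(σ,τ) = f(τ,σ)), nonnegative, and vanishing on the diagonal (f(σ,σ) = 0 for all σ), and let F_f(ξ) = Σ_{x,y∈E} π(x)π(y) f(ξ(x), ξ(y)). Then for every ξ ∈ S^E, L^μ_VM F_f(ξ) ≤ 2 Σ_{x∈E} π(x) ∫_S f(σ, ξ(x)) dμ(σ). -/

import Mathlib

open MeasureTheory Finset

/-- Voting generator `L_VM F(ξ) = ∑_{x,y} q(x,y)[F(ξ^{x,y}) − F(ξ)]`. -/
noncomputable def LVM {E S : Type*} [Fintype E] [DecidableEq E]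
    (q : E → E → ℝ) (F : (E → S) → ℝ) (ξ : E → S) : ℝ :=
  ∑ x : E, ∑ y : E, q x y * (F (Function.update ξ x (ξ y)) - F ξ)

/-- Mutation generator `L_μ F(ξ) = ∑_{x∈E} ∫_S [F(ξ^{x|σ}) − F(ξ)] dμ(σ)`. -/
noncomputable def Lmu {E S : Type*} [Fintype E] [DecidableEq E] [MeasurableSpace S]
    (μ : Measure S) (F : (E → S) → ℝ) (ξ : E → S) : ℝ :=
  ∑ x : E, ∫ σ, (F (Function.update ξ x σ) - F ξ) ∂μ

/-- The test function `F_f(ξ) = ∑_{x,y∈E} π(x)π(y) f(ξ(x), ξ(y))`. -/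
noncomputable def Ftest {E S : Type*} [Fintype E]
    (π : E → ℝ) (f : S → S → ℝ) (ξ : E → S) : ℝ :=
  ∑ x : E, ∑ y : E, π x * π y * f (ξ x) (ξ y)

/-- The bound used in the proof of Theorem 5.1: for `f` bounded measurable, symmetric,
nonnegative and vanishing on the diagonal,
`L^μ_VM F_f(ξ) ≤ 2 ∑_{x∈E} π(x) ∫_S f(σ, ξ(x)) dμ(σ)`. -/
theorem full_generator_on_Ff_upper_bound
    {E S : Type*} [Fintype E] [DecidableEq E]
    [MetricSpace S] [CompactSpace S] [MeasurableSpace S] [BorelSpace S]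
    (hE : 2 ≤ Fintype.card E)
    (q : E → E → ℝ) (π : E → ℝ) (μ : Measure S) [IsFiniteMeasure μ]
    (hq0 : ∀ x y, 0 ≤ q x y) (hq1 : ∀ x, ∑ y, q x y = 1)
    (hqdiag : ∀ x, q x x = 0)
    (hirr : ∀ x y : E, ∃ n : ℕ, 0 < ((Matrix.of q) ^ n) x y)
    (hπpos : ∀ x, 0 < π x) (hπ1 : ∑ x, π x = 1)
    (hπstat : ∀ y, ∑ x, π x * q x y = π y)
    (f : S → S → ℝ)
    (hfmeas : Measurable (fun p : S × S => f p.1 p.2))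
    (hfbdd : ∃ Cb : ℝ, ∀ σ τ : S, |f σ τ| ≤ Cb)
    (hfsymm : ∀ σ τ, f σ τ = f τ σ)
    (hfnonneg : ∀ σ τ, 0 ≤ f σ τ)
    (hfdiag : ∀ σ, f σ σ = 0)
    (ξ : E → S) :
    LVM q (Ftest π f) ξ + Lmu μ (Ftest π f) ξ ≤
      2 * ∑ x : E, π x * ∫ σ, f σ (ξ x) ∂μ := by
  classical
  obtain ⟨Cb, hCb⟩ := hfbdd
  -- key identity for a single-site replacement
  have key : ∀ (x : E) (s : S),
      Ftest π f (Function.update ξ x s) - Ftest π f ξ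
        = 2 * π x * ((∑ b, π b * f s (ξ b)) - π x * f s (ξ x)
            - ∑ b, π b * f (ξ x) (ξ b)) := by
    intro x s
    have expand : ∀ ζ : E → S, (∀ b, b ≠ x → ζ b = ξ b) →
        (∑ a : E, ∑ b : E, π a * π b * f (ζ a) (ζ b))
          = π x * π x * f (ζ x) (ζ x)
            + (∑ b ∈ univ.erase x, π x * π b * f (ζ x) (ξ b))
            + ((∑ a ∈ univ.erase x, π a * π x * f (ξ a) (ζ x))
            + ∑ a ∈ univ.erase x, ∑ b ∈ univ.erase x, π a * π b * f (ξ a) (ξ b)) := by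
      intro ζ hζ
      rw [← Finset.add_sum_erase _ (fun a => ∑ b, π a * π b * f (ζ a) (ζ b)) (Finset.mem_univ x),
          ← Finset.add_sum_erase _ (fun b => π x * π b * f (ζ x) (ζ b)) (Finset.mem_univ x)]
      have h1 : ∑ b ∈ univ.erase x, π x * π b * f (ζ x) (ζ b)
          = ∑ b ∈ univ.erase x, π x * π b * f (ζ x) (ξ b) :=
        Finset.sum_congr rfl fun b hb => by rw [hζ b (Finset.ne_of_mem_erase hb)]
      have h2 : ∑ a ∈ univ.erase x, ∑ b, π a * π b * f (ζ a) (ζ b)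
          = ∑ a ∈ univ.erase x, (π a * π x * f (ξ a) (ζ x)
              + ∑ b ∈ univ.erase x, π a * π b * f (ξ a) (ξ b)) := by
        refine Finset.sum_congr rfl fun a ha => ?_
        rw [← Finset.add_sum_erase _ (fun b => π a * π b * f (ζ a) (ζ b)) (Finset.mem_univ x),
            hζ a (Finset.ne_of_mem_erase ha)]
        congr 1
        exact Finset.sum_congr rfl fun b hb => by rw [hζ b (Finset.ne_of_mem_erase hb)]
      rw [h1, h2, Finset.sum_add_distrib]
    have hupd : ∀ b, b ≠ x → Function.update ξ x s b = ξ b :=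
      fun b hb => Function.update_of_ne hb s ξ
    have e1 := expand (Function.update ξ x s) hupd
    have e2 := expand ξ (fun b _ => rfl)
    simp only [Ftest]
    rw [e1, e2, Function.update_self]
    have hsym1 : ∑ a ∈ univ.erase x, π a * π x * f (ξ a) s
        = ∑ b ∈ univ.erase x, π x * π b * f s (ξ b) :=
      Finset.sum_congr rfl fun a _ => by rw [hfsymm]; ring
    have hsym2 : ∑ a ∈ univ.erase x, π a * π x * f (ξ a) (ξ x)
        = ∑ b ∈ univ.erase x, π x * π b * f (ξ x) (ξ b) :=
      Finset.sum_congr rfl fun a _ => by rw [hfsymm]; ring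
    have her1 : ∑ b ∈ univ.erase x, π x * π b * f s (ξ b)
        = (∑ b, π x * (π b * f s (ξ b))) - π x * π x * f s (ξ x) := by
      rw [Finset.sum_erase_eq_sub (Finset.mem_univ x)]
      congr 1
      exact Finset.sum_congr rfl fun b _ => by ring
    have her2 : ∑ b ∈ univ.erase x, π x * π b * f (ξ x) (ξ b)
        = ∑ b, π x * (π b * f (ξ x) (ξ b)) := by
      rw [Finset.sum_erase_eq_sub (Finset.mem_univ x), hfdiag]
      have : ∑ b, π x * π b * f (ξ x) (ξ b) = ∑ b, π x * (π b * f (ξ x) (ξ b)) :=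
        Finset.sum_congr rfl fun b _ => by ring
      rw [this]; ring
    rw [hsym1, hsym2, her1, her2, hfdiag s, hfdiag (ξ x), ← Finset.mul_sum, ← Finset.mul_sum]
    ring
  -- the function G
  set G : E → ℝ := fun a => ∑ b, π b * f (ξ a) (ξ b) with hGdef
  have hGnonneg : ∀ a, 0 ≤ G a :=
    fun a => Finset.sum_nonneg fun b _ =>
      mul_nonneg (hπpos b).le (hfnonneg _ _)
  -- voter part is nonpositive
  have hLVM : LVM q (Ftest π f) ξ ≤ 0 := by
    have hrw : LVM q (Ftest π f) ξ
        = ∑ x, ∑ y, (q x y * (2 * π x * G y) - q x y * (2 * π x * (π x * f (ξ y) (ξ x)))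
            - q x y * (2 * π x * G x)) := by
      unfold LVM
      refine Finset.sum_congr rfl fun x _ => Finset.sum_congr rfl fun y _ => ?_
      rw [key x (ξ y)]
      ring
    have hA : ∑ x, ∑ y, q x y * (2 * π x * G y) = 2 * ∑ y, π y * G y := by
      rw [Finset.sum_comm]
      have : ∀ y : E, ∑ x, q x y * (2 * π x * G y) = 2 * G y * ∑ x, π x * q x y := by
        intro y
        rw [Finset.mul_sum]
        exact Finset.sum_congr rfl fun x _ => by ring
      rw [Finset.sum_congr rfl fun y _ => this y, Finset.mul_sum]
      exact Finset.sum_congr rfl fun y _ => by rw [hπstat]; ring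
    have hB : ∑ x, ∑ y, q x y * (2 * π x * G x) = 2 * ∑ x, π x * G x := by
      have : ∀ x : E, ∑ y, q x y * (2 * π x * G x) = 2 * π x * G x := by
        intro x
        rw [← Finset.sum_mul, hq1]
        ring
      rw [Finset.sum_congr rfl fun x _ => this x, Finset.mul_sum]
      exact Finset.sum_congr rfl fun x _ => by ring
    have hC : 0 ≤ ∑ x, ∑ y, q x y * (2 * π x * (π x * f (ξ y) (ξ x))) :=
      Finset.sum_nonneg fun x _ => Finset.sum_nonneg fun y _ =>
        mul_nonneg (hq0 x y) (mul_nonneg (by nlinarith [hπpos x]) (mul_nonneg (hπpos x).le (hfnonneg _ _)))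
    rw [hrw]
    simp only [Finset.sum_sub_distrib]
    rw [hA, hB]
    linarith
  -- integrability facts
  have hmeas : ∀ τ : S, Measurable fun σ => f σ τ :=
    fun τ => hfmeas.comp (measurable_id.prodMk measurable_const)
  have hint : ∀ τ : S, Integrable (fun σ => f σ τ) μ := fun τ =>
    Integrable.mono' (integrable_const Cb) (hmeas τ).aestronglyMeasurable
      (Filter.Eventually.of_forall fun σ => by simpa [Real.norm_eq_abs] using hCb σ τ)
  set I : E → ℝ := fun b => ∫ σ, f σ (ξ b) ∂μ with hIdef
  have hInonneg : ∀ b, 0 ≤ I b := fun b => integral_nonneg fun σ => hfnonneg _ _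
  set m : ℝ := (μ Set.univ).toReal with hmdef
  have hm : 0 ≤ m := ENNReal.toReal_nonneg
  -- mutation part
  have hxint : ∀ x : E, ∫ σ, (Ftest π f (Function.update ξ x σ) - Ftest π f ξ) ∂μ
      = 2 * π x * ((∑ b, π b * I b) - π x * I x - G x * m) := by
    intro x
    have h1 : (fun σ => Ftest π f (Function.update ξ x σ) - Ftest π f ξ)
        = fun σ => 2 * π x * ((∑ b, π b * f σ (ξ b)) - π x * f σ (ξ x) - G x) :=
      funext fun σ => key x σ
    rw [h1, integral_const_mul]
    have hAint : Integrable (fun σ => ∑ b, π b * f σ (ξ b)) μ :=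
      integrable_finset_sum _ fun b _ => (hint (ξ b)).const_mul (π b)
    have hBint : Integrable (fun σ => π x * f σ (ξ x)) μ := (hint (ξ x)).const_mul _
    have hABint : Integrable (fun σ => (∑ b, π b * f σ (ξ b)) - π x * f σ (ξ x)) μ := by
      exact hAint.sub hBint
    rw [integral_sub hABint (integrable_const _), integral_sub hAint hBint,
        integral_finset_sum _ fun b _ => (hint (ξ b)).const_mul (π b), integral_const,
        integral_const_mul]
    have : ∑ b, ∫ σ, π b * f σ (ξ b) ∂μ = ∑ b, π b * I b :=
      Finset.sum_congr rfl fun b _ => integral_const_mul _ _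
    rw [this, smul_eq_mul]
    simp only [hIdef, hmdef, Measure.real]
    ring
  have hLmu : Lmu μ (Ftest π f) ξ ≤ 2 * ∑ x, π x * I x := by
    unfold Lmu
    have hterm : ∀ x : E, ∫ σ, (Ftest π f (Function.update ξ x σ) - Ftest π f ξ) ∂μ
        ≤ 2 * π x * (∑ b, π b * I b) := by
      intro x
      rw [hxint x]
      have h1 : 0 ≤ π x * I x := mul_nonneg (hπpos x).le (hInonneg x)
      have h2 : 0 ≤ G x * m := mul_nonneg (hGnonneg x) hm
      have h3 : 0 ≤ 2 * π x := by nlinarith [hπpos x]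
      nlinarith
    calc (∑ x, ∫ σ, (Ftest π f (Function.update ξ x σ) - Ftest π f ξ) ∂μ)
        ≤ ∑ x, 2 * π x * (∑ b, π b * I b) :=
          Finset.sum_le_sum fun x _ => hterm x
      _ = (2 * ∑ b, π b * I b) * ∑ x, π x := by
          rw [Finset.mul_sum]
          exact Finset.sum_congr rfl fun x _ => by ring
      _ = 2 * ∑ x, π x * I x := by rw [hπ1]; ring
  linarith
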